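/- Given a sequence of n k-tuples of integers, there exists a subsequence of length at least n^{(1/2)^k} (suitably floored) in which every one of the k coordinate sequences is monotonic. -/

import Mathlib

open Function Finset in
private theorem my_erdos_szekeres {α : Type*} [LinearOrder α] {r s n : ℕ} {f : Fin n → α}
    (hn : r * s < n) (hf : Function.Injective f) :
    (∃ t : Finset (Fin n), r < #t ∧ StrictMonoOn f ↑t) ∨
      ∃ t : Finset (Fin n), s < #t ∧ StrictAntiOn f ↑t := by
  let inc_sequences_ending_in : Fin n → Finset (Finset (Fin n)) := fun i =>
    univ.powerset.filter fun t => Finset.max t = i ∧ StrictMonoOn f ↑t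
  let dec_sequences_ending_in : Fin n → Finset (Finset (Fin n)) := fun i =>
    univ.powerset.filter fun t => Finset.max t = i ∧ StrictAntiOn f ↑t
  have inc_i : ∀ i, {i} ∈ inc_sequences_ending_in i := fun i => by
    simp [inc_sequences_ending_in, StrictMonoOn]
  have dec_i : ∀ i, {i} ∈ dec_sequences_ending_in i := fun i => by
    simp [dec_sequences_ending_in, StrictAntiOn]
  let ab' : Fin n → ℕ × ℕ := by
    intro i
    apply
      (max' ((inc_sequences_ending_in i).image card) (Nonempty.image ⟨{i}, inc_i i⟩ _),
        max' ((dec_sequences_ending_in i).image card) (Nonempty.image ⟨{i}, dec_i i⟩ _))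
  generalize hab : ab' = ab
  rsuffices ⟨i, hi⟩ : ∃ i, r < (ab i).1 ∨ s < (ab i).2
  · refine Or.imp ?_ ?_ hi
    on_goal 1 =>
      have : (ab i).1 ∈ image card (inc_sequences_ending_in i) := by
        simp only [← hab]; exact max'_mem _ (Nonempty.image ⟨{i}, inc_i i⟩ _)
    on_goal 2 =>
      have : (ab i).2 ∈ image card (dec_sequences_ending_in i) := by
        simp only [← hab]; exact max'_mem _ (Nonempty.image ⟨{i}, dec_i i⟩ _)
    all_goals
      intro hi
      rw [mem_image] at this
      obtain ⟨t, ht₁, ht₂⟩ := this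
      refine ⟨t, by rwa [ht₂], ?_⟩
      rw [mem_filter] at ht₁
      apply ht₁.2.2
  have : Injective ab := by
    simp only [← hab]
    apply Function.Injective.of_lt_imp_ne
    intro i j k q
    injection q with q₁ q₂
    cases lt_or_gt_of_ne fun _ => ne_of_lt ‹i < j› (hf ‹f i = f j›)
    on_goal 1 =>
      apply ne_of_lt _ q₁
      have : (ab' i).1 ∈ image card (inc_sequences_ending_in i) := by exact max'_mem _ (Nonempty.image ⟨{i}, inc_i i⟩ _)
    on_goal 2 =>
      apply ne_of_lt _ q₂
      have : (ab' i).2 ∈ image card (dec_sequences_ending_in i) := by exact max'_mem _ (Nonempty.image ⟨{i}, dec_i i⟩ _)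
    all_goals
      rw [Nat.lt_iff_add_one_le]
      apply le_max'
      rw [mem_image] at this ⊢
      rcases this with ⟨t, ht₁, ht₂⟩
      rw [mem_filter] at ht₁
      have : t.max = i := by simp only [ht₁.2.1]
      refine ⟨insert j t, ?_, ?_⟩
      · rw [mem_filter]
        refine ⟨?_, ?_, ?_⟩
        · rw [mem_powerset]; apply subset_univ
        · convert max_insert (a := j) (s := t)
          rw [ht₁.2.1, max_eq_left]
          apply WithBot.coe_le_coe.mpr (le_of_lt ‹i < j›)
        simp only [StrictMonoOn, StrictAntiOn, coe_insert, Set.mem_insert_iff, mem_coe]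
        rintro x ⟨rfl | _⟩ y ⟨rfl | _⟩ _
        · apply (irrefl _ ‹j < j›).elim
        · exfalso
          apply not_le_of_gt (_root_.trans ‹i < j› ‹j < y›) (le_max_of_eq ‹y ∈ t› ‹t.max = i›)
        · first
          | apply lt_of_le_of_lt _ ‹f i < f j›
          | apply lt_of_lt_of_le ‹f j < f i› _
          rcases lt_or_eq_of_le (le_max_of_eq ‹x ∈ t› ‹t.max = i›) with (_ | rfl)
          · apply le_of_lt (ht₁.2.2 ‹x ∈ t› (mem_of_max ‹t.max = i›) ‹x < i›)
          · rfl
        · apply ht₁.2.2 ‹x ∈ t› ‹y ∈ t› ‹x < y›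
      · rw [card_insert_of_notMem, ht₂]
        intro
        apply not_le_of_gt ‹i < j› (le_max_of_eq ‹j ∈ t› ‹t.max = i›)
  by_contra! q
  let ran : Finset (ℕ × ℕ) := (range r).image Nat.succ ×ˢ (range s).image Nat.succ
  have : image ab univ ⊆ ran := by
    rintro ⟨x₁, x₂⟩
    simp only [ran, mem_image, exists_prop, mem_range, mem_univ, mem_product, true_and,
      Prod.ext_iff]
    rintro ⟨i, rfl, rfl⟩
    specialize q i
    have z : 1 ≤ (ab i).1 ∧ 1 ≤ (ab i).2 := by
      simp only [← hab]
      constructor <;>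
        · apply le_max'
          rw [mem_image]
          exact ⟨{i}, by solve_by_elim, card_singleton i⟩
    exact ⟨⟨(ab i).1 - 1, by omega⟩, (ab i).2 - 1, by omega⟩
  apply not_le_of_gt hn
  simpa [ran, Nat.succ_injective, card_image_of_injective, ‹Injective ab›] using card_le_card this

private theorem exists_mono_subseq (n : ℕ) (f : Fin n → ℤ) :
    ∃ (m : ℕ) (σ : Fin m → Fin n), StrictMono σ ∧
      (Monotone (fun j => f (σ j)) ∨ Antitone (fun j => f (σ j))) ∧ n ≤ m * m := by
  rcases Nat.eq_zero_or_pos n with rfl | hn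
  · exact ⟨0, fun j => j.elim0, fun j => j.elim0, Or.inl fun j => j.elim0, le_refl 0⟩
  · set m := Nat.sqrt (n - 1) + 1 with hm
    have hmm : n ≤ m * m := by
      have : n - 1 < m * m := Nat.lt_succ_sqrt (n - 1)
      omega
    have hrs : (m - 1) * (m - 1) < n := by
      have := Nat.sqrt_le (n - 1)
      simp only [hm, Nat.add_sub_cancel]
      omega
    set g : Fin n → ℤ ×ₗ ℕ := fun j => toLex (f j, (j : ℕ)) with hg
    have hginj : Function.Injective g := by
      intro x y hxy
      have : ((x : ℕ) : ℕ) = y := congrArg (fun p => (ofLex p).2) hxy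
      exact Fin.ext this
    have key : ∀ (x y : Fin n), g x < g y → f x ≤ f y := by
      intro x y hxy
      rcases Prod.Lex.lt_iff.mp hxy with h | h
      · exact le_of_lt h
      · exact le_of_eq h.1
    rcases my_erdos_szekeres (f := g) hrs hginj with ⟨t, ht, hmono⟩ | ⟨t, ht, hanti⟩
    · refine ⟨t.card, t.orderEmbOfFin rfl, (t.orderEmbOfFin rfl).strictMono, Or.inl ?_, ?_⟩
      · intro x y hxy
        rcases eq_or_lt_of_le hxy with rfl | hlt
        · exact le_refl _
        · exact key _ _ (hmono (t.orderEmbOfFin_mem rfl x) (t.orderEmbOfFin_mem rfl y)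
            ((t.orderEmbOfFin rfl).strictMono hlt))
      · calc n ≤ m * m := hmm
          _ ≤ t.card * t.card := Nat.mul_le_mul (by omega) (by omega)
    · refine ⟨t.card, t.orderEmbOfFin rfl, (t.orderEmbOfFin rfl).strictMono, Or.inr ?_, ?_⟩
      · intro x y hxy
        rcases eq_or_lt_of_le hxy with rfl | hlt
        · exact le_refl _
        · exact key _ _ (hanti (t.orderEmbOfFin_mem rfl x) (t.orderEmbOfFin_mem rfl y)
            ((t.orderEmbOfFin rfl).strictMono hlt))
      · calc n ≤ m * m := hmm
          _ ≤ t.card * t.card := Nat.mul_le_mul (by omega) (by omega)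

theorem tuples_monotone_subseq (n k : ℕ) (a : Fin n → (Fin k → ℤ)) :
    ∃ (m : ℕ) (σ : Fin m → Fin n), StrictMono σ ∧
      (∀ i : Fin k, Monotone (fun j => a (σ j) i) ∨ Antitone (fun j => a (σ j) i)) ∧
      n ≤ m ^ (2 ^ k) := by
  induction k with
  | zero => exact ⟨n, id, strictMono_id, fun i => i.elim0, by simp⟩
  | succ k ih =>
    obtain ⟨m, σ, hσ, hmono, hn⟩ := ih (fun j i => a j i.castSucc)
    obtain ⟨m', τ, hτ, hlast, hm⟩ := exists_mono_subseq m (fun j => a (σ j) (Fin.last k))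
    refine ⟨m', σ ∘ τ, hσ.comp hτ, ?_, ?_⟩
    · intro i
      refine Fin.lastCases ?_ ?_ i
      · exact hlast
      · intro i
        rcases hmono i with h | h
        · exact Or.inl (h.comp hτ.monotone)
        · exact Or.inr (h.comp_monotone hτ.monotone)
    · calc n ≤ m ^ 2 ^ k := hn
        _ ≤ (m' * m') ^ 2 ^ k := Nat.pow_le_pow_left hm _
        _ = m' ^ 2 ^ (k + 1) := by rw [← sq, ← pow_mul, pow_succ, Nat.mul_comm]
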